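/- If 𝔸 is an algebra in a Taylor variety and θ is a congruence of 𝔸, then the binary hypercommutator equals the binary term condition commutator: [θ,θ]_H = [θ,θ]_TC. -/

import Mathlib

universe u v

structure Signature : Type 1 where
  ops : Type
  arity : ops → ℕ

class Alg (σ : Signature) (A : Type u) : Type u where
  interp : ∀ o : σ.ops, (Fin (σ.arity o) → A) → A

/-- A labeled `S`-dimensional cube with vertices labeled by elements of `A`. -/
abbrev Cube (S : Type v) (A : Type u) : Type (max u v) := (S → Bool) → A

section Defs

variable {A : Type u} {B : Type u} {S : Type v}

def Quasireflexive (R : Set (B × B)) : Prop :=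
  ∀ a b : B, (a, b) ∈ R → (a, a) ∈ R ∧ (b, b) ∈ R

def SymmRel (R : Set (B × B)) : Prop := ∀ a b : B, (a, b) ∈ R → (b, a) ∈ R

def TransRel (R : Set (B × B)) : Prop :=
  ∀ a b c : B, (a, b) ∈ R → (b, c) ∈ R → (a, c) ∈ R

def face [DecidableEq S] (i : S) (b : Bool) (γ : Cube S A) : Cube {x : S // x ≠ i} A :=
  fun f => γ fun j => if h : j = i then b else f ⟨j, h⟩

def facesRel [DecidableEq S] (i : S) (R : Set (Cube S A)) :
    Set (Cube {x : S // x ≠ i} A × Cube {x : S // x ≠ i} A) :=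
  {p | ∃ γ ∈ R, p = (face i false γ, face i true γ)}

def SRefl [DecidableEq S] (R : Set (Cube S A)) : Prop := ∀ i : S, Quasireflexive (facesRel i R)
def SSymm [DecidableEq S] (R : Set (Cube S A)) : Prop := ∀ i : S, SymmRel (facesRel i R)
def STrans [DecidableEq S] (R : Set (Cube S A)) : Prop := ∀ i : S, TransRel (facesRel i R)

def glue (i : S) (a b : Cube {x : S // x ≠ i} A) : Cube S A :=
  fun f => if f i then b (fun j => f j.val) else a (fun j => f j.val)

def reflMap [DecidableEq S] (i : S) (b : Bool) (γ : Cube S A) : Cube S A :=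
  glue i (face i b γ) (face i b γ)

def symMap [DecidableEq S] (i : S) (γ : Cube S A) : Cube S A :=
  glue i (face i true γ) (face i false γ)

def cut (Q : Set S) [DecidablePred (· ∈ Q)] (γ : Cube S A) :
    Cube {x : S // x ∈ Q} (Cube {x : S // x ∉ Q} A) :=
  fun f g => γ fun j => if h : j ∈ Q then f ⟨j, h⟩ else g ⟨j, h⟩

def cutProj (Q : Set S) [DecidablePred (· ∈ Q)] (R : Set (Cube S A))
    (f : {x : S // x ∈ Q} → Bool) : Set (Cube {x : S // x ∉ Q} A) :=
  (fun γ => cut Q γ f) '' R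

variable (σ : Signature)

def CompatCube [Alg σ A] (R : Set (Cube S A)) : Prop :=
  ∀ (o : σ.ops) (γ : Fin (σ.arity o) → Cube S A), (∀ k, γ k ∈ R) →
    (fun f => Alg.interp (A := A) o fun k => γ k f) ∈ R

def CompatRel [Alg σ A] (θ : Set (A × A)) : Prop :=
  ∀ (o : σ.ops) (x y : Fin (σ.arity o) → A), (∀ k, (x k, y k) ∈ θ) →
    (Alg.interp (A := A) o x, Alg.interp (A := A) o y) ∈ θ

def IsCongruence [Alg σ A] (θ : Set (A × A)) : Prop :=
  (∀ a : A, (a, a) ∈ θ) ∧ SymmRel θ ∧ TransRel θ ∧ CompatRel σ θ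

def IsTolerance [Alg σ A] [DecidableEq S] (R : Set (Cube S A)) : Prop :=
  CompatCube σ R ∧ SRefl R ∧ SSymm R

def IsHCongruence [Alg σ A] [DecidableEq S] (R : Set (Cube S A)) : Prop :=
  IsTolerance σ R ∧ STrans R

def subalgGen [Alg σ A] (X : Set (Cube S A)) : Set (Cube S A) :=
  ⋂₀ {R : Set (Cube S A) | CompatCube σ R ∧ X ⊆ R}

def tolGen [Alg σ A] [DecidableEq S] (X : Set (Cube S A)) : Set (Cube S A) :=
  ⋂₀ {R : Set (Cube S A) | IsTolerance σ R ∧ X ⊆ R}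

def congGen [Alg σ A] [DecidableEq S] (X : Set (Cube S A)) : Set (Cube S A) :=
  ⋂₀ {R : Set (Cube S A) | IsHCongruence σ R ∧ X ⊆ R}

def cubeAt (i : S) (p : A × A) : Cube S A := fun f => bif f i then p.2 else p.1

def cubeSet (i : S) (θ : Set (A × A)) : Set (Cube S A) := cubeAt i '' θ

def MRel [Alg σ A] [DecidableEq S] (θ : S → Set (A × A)) : Set (Cube S A) :=
  tolGen σ (⋃ i : S, cubeSet i (θ i))

def DeltaRel [Alg σ A] [DecidableEq S] (θ : S → Set (A × A)) : Set (Cube S A) :=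
  congGen σ (⋃ i : S, cubeSet i (θ i))

def rectRel [DecidableEq S] (θ : S → Set (A × A)) : Set (Cube S A) :=
  {γ | ∀ (i : S) (f : {x : S // x ≠ i} → Bool), (face i false γ f, face i true γ f) ∈ θ i}

def dirClosure [DecidableEq S] (i : S) (R : Set (Cube S A)) : Set (Cube S A) :=
  {γ | Relation.TransGen (fun a b : Cube {x : S // x ≠ i} A => (a, b) ∈ facesRel i R)
      (face i false γ) (face i true γ)}

def Centrality [DecidableEq S] [Fintype S] (δ : Set (A × A)) (i : S)
    (R : Set (Cube S A)) : Prop :=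
  ¬ ∃ γ ∈ R, Nat.card {f : {x : S // x ≠ i} → Bool //
      (face i false γ f, face i true γ f) ∈ δ} = 2 ^ (Fintype.card S - 1) - 1

end Defs

def finMod (n : ℕ) [NeZero n] (j : ℕ) : Fin n :=
  ⟨j % n, Nat.mod_lt _ (Nat.pos_of_ne_zero (NeZero.ne n))⟩

def tcSeq {A : Type u} {n : ℕ} [NeZero n] (Y : Set (Cube (Fin n) A)) :
    ℕ → Set (Cube (Fin n) A)
  | 0 => dirClosure (finMod n 0) Y
  | j + 1 => dirClosure (finMod n (j + 1)) (tcSeq Y j)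

def tcClosure {A : Type u} {n : ℕ} [NeZero n] (Y : Set (Cube (Fin n) A)) :
    Set (Cube (Fin n) A) := ⋃ j : ℕ, tcSeq Y j

def lastIdx (n : ℕ) [NeZero n] : Fin n :=
  ⟨n - 1, Nat.sub_lt (Nat.pos_of_ne_zero (NeZero.ne n)) Nat.one_pos⟩

def tcComm (σ : Signature) {A : Type u} [Alg σ A] (n : ℕ) [NeZero n]
    (θ : Fin n → Set (A × A)) : Set (A × A) :=
  ⋂₀ {δ : Set (A × A) | IsCongruence σ δ ∧ Centrality δ (lastIdx n) (MRel σ θ)}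

def hComm (σ : Signature) {A : Type u} [Alg σ A] (n : ℕ) [NeZero n]
    (θ : Fin n → Set (A × A)) : Set (A × A) :=
  ⋂₀ {δ : Set (A × A) | IsCongruence σ δ ∧ Centrality δ (lastIdx n) (DeltaRel σ θ)}

inductive Term (σ : Signature) (k : ℕ) : Type
  | var : Fin k → Term σ k
  | app : (o : σ.ops) → (Fin (σ.arity o) → Term σ k) → Term σ k

def Term.eval {σ : Signature} {k : ℕ} {A : Type u} [Alg σ A] :
    Term σ k → (Fin k → A) → A
  | .var i, v => v i
  | .app o ts, v => Alg.interp (A := A) o fun j => (ts j).eval v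

def IsTaylorAlg (σ : Signature) (A : Type u) [Alg σ A] : Prop :=
  ∃ (m : ℕ) (t : Term σ (m + 1)),
    (∀ a : A, t.eval (fun _ => a) = a) ∧
    ∀ e : Fin (m + 1), ∃ u v : Fin (m + 1) → Bool, u e = false ∧ v e = true ∧
      ∀ x y : A, t.eval (fun i => bif u i then y else x)
               = t.eval (fun i => bif v i then y else x)

open Classical in
noncomputable def comCube {A : Type u} (n : ℕ) (x y : A) : Cube (Fin n) A :=
  fun f => if ∀ i, f i = true then y else x

def iSupported {A : Type u} {S : Type v} [DecidableEq S] (i : S) (γ : Cube S A)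
    (x y : A) : Prop :=
  face i false γ (fun _ => true) = x ∧ face i true γ (fun _ => true) = y ∧
  ∀ f : {z : S // z ≠ i} → Bool, f ≠ (fun _ => true) →
    face i false γ f = face i true γ f

def sqCube {A : Type u} (a b c d : A) : Cube (Fin 2) A :=
  fun f => if f 0 then (if f 1 then d else c) else (if f 1 then b else a)

def lcs (σ : Signature) {A : Type u} [Alg σ A] (θ : Set (A × A)) : ℕ → Set (A × A)
  | 0 => θ
  | n + 1 => tcComm σ 2 ![θ, lcs σ θ n]

def diagRel (A : Type u) : Set (A × A) := {p : A × A | p.1 = p.2}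


section Stmt14Aux

variable {A : Type u}

instance aux14_subsing (i : Fin 2) : Subsingleton {x : Fin 2 // x ≠ i} := by
  constructor
  rintro ⟨x, hx⟩ ⟨y, hy⟩
  have hx' : x.val ≠ i.val := fun h => hx (Fin.ext h)
  have hy' : y.val ≠ i.val := fun h => hy (Fin.ext h)
  apply Subtype.ext
  show x = y
  apply Fin.ext
  omega

def fBB (b c : Bool) : Fin 2 → Bool := fun j => if j = 0 then b else c

lemma bfun_eq {i : Fin 2} (g : {x : Fin 2 // x ≠ i} → Bool) (w : {x : Fin 2 // x ≠ i}) :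
    g = fun _ => g w := by
  funext z; rw [Subsingleton.elim z w]

def w0 : {x : Fin 2 // x ≠ (1 : Fin 2)} := ⟨0, by decide⟩
def w1 : {x : Fin 2 // x ≠ (0 : Fin 2)} := ⟨1, by decide⟩

lemma face1_eval (γ : Cube (Fin 2) A) (b : Bool) (g : {x : Fin 2 // x ≠ (1 : Fin 2)} → Bool) :
    face 1 b γ g = γ (fBB (g w0) b) := by
  show γ _ = γ _
  congr 1
  funext j
  have : j = 0 ∨ j = 1 := by omega
  rcases this with h | h <;> subst h <;> simp [fBB, w0]

lemma face0_eval (γ : Cube (Fin 2) A) (b : Bool) (g : {x : Fin 2 // x ≠ (0 : Fin 2)} → Bool) :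
    face 0 b γ g = γ (fBB b (g w1)) := by
  show γ _ = γ _
  congr 1
  funext j
  have : j = 0 ∨ j = 1 := by omega
  rcases this with h | h <;> subst h <;> simp [fBB, w1]

end Stmt14Aux

section Stmt14Card

variable {A : Type u}

lemma aux14_card (P : ({x : Fin 2 // x ≠ (1 : Fin 2)} → Bool) → Prop) :
    Nat.card {f // P f} = 1 ↔ ¬ (P (fun _ => false) ↔ P (fun _ => true)) := by
  have e : {f // P f} ≃ {b : Bool // P (fun _ => b)} :=
    { toFun := fun f => ⟨f.1 w0, by
        have := f.2
        rwa [bfun_eq f.1 w0] at this⟩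
      invFun := fun b => ⟨fun _ => b.1, b.2⟩
      left_inv := fun f => Subtype.ext (bfun_eq f.1 w0).symm
      right_inv := fun b => rfl }
  rw [Nat.card_congr e]
  by_cases hf : P (fun _ => false) <;> by_cases ht : P (fun _ => true)
  · have e2 : {b : Bool // P (fun _ => b)} ≃ Bool :=
      Equiv.subtypeUnivEquiv (fun b => by cases b; exact hf; exact ht)
    rw [Nat.card_congr e2]
    simp [Nat.card_eq_fintype_card, hf, ht]
  · haveI : Unique {b : Bool // P (fun _ => b)} :=
      { default := ⟨false, hf⟩
        uniq := by rintro ⟨b, hb⟩; cases b; rfl; exact absurd hb ht }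
    rw [Nat.card_unique]
    simp [hf, ht]
  · haveI : Unique {b : Bool // P (fun _ => b)} :=
      { default := ⟨true, ht⟩
        uniq := by rintro ⟨b, hb⟩; cases b; exact absurd hb hf; rfl }
    rw [Nat.card_unique]
    simp [hf, ht]
  · haveI : IsEmpty {b : Bool // P (fun _ => b)} :=
      ⟨by rintro ⟨b, hb⟩; cases b; exact hf hb; exact ht hb⟩
    rw [Nat.card_of_isEmpty]
    simp [hf, ht]

/-- characterization of 2-dim centrality at the last index -/
lemma centrality_iff (δ : Set (A × A)) (R : Set (Cube (Fin 2) A)) :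
    Centrality δ (lastIdx 2) R ↔ ∀ γ ∈ R,
      (((γ (fBB false false), γ (fBB false true)) ∈ δ) ↔
        ((γ (fBB true false), γ (fBB true true)) ∈ δ)) := by
  have key : ∀ γ : Cube (Fin 2) A,
      (Nat.card {f // (face (lastIdx 2) false γ f, face (lastIdx 2) true γ f) ∈ δ}
          = 2 ^ (Fintype.card (Fin 2) - 1) - 1) ↔
        ¬ (((γ (fBB false false), γ (fBB false true)) ∈ δ) ↔
          ((γ (fBB true false), γ (fBB true true)) ∈ δ)) := by
    intro γ
    have hl : lastIdx 2 = (1 : Fin 2) := rfl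
    have hc : (2 : ℕ) ^ (Fintype.card (Fin 2) - 1) - 1 = 1 := by simp
    rw [hl, hc, aux14_card]
    simp only [face1_eval]
  constructor
  · intro h γ hγ
    by_contra hbad
    exact h ⟨γ, hγ, (key γ).2 hbad⟩
  · rintro h ⟨γ, hγ, hcard⟩
    exact (key γ).1 hcard (h γ hγ)

end Stmt14Card

section Stmt14Sq

variable {A : Type u} {S : Type v} [DecidableEq S]

lemma face_glue (i : S) (C D : Cube {x : S // x ≠ i} A) (b : Bool) :
    face i b (glue i C D) = bif b then D else C := by
  funext g
  show glue i C D _ = _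
  have harg : (fun l : {x : S // x ≠ i} =>
      (fun j => if h : j = i then b else g ⟨j, h⟩) l.val) = g := by
    funext l
    simp [l.prop]
  unfold glue
  simp only [dif_pos rfl]
  rw [harg]
  cases b <;> simp

lemma glue_face_self (i : S) (γ : Cube S A) :
    glue i (face i false γ) (face i true γ) = γ := by
  funext f
  unfold glue face
  cases hfi : f i <;> simp only [hfi, cond_false, cond_true, if_true, if_false,
    Bool.false_eq_true, Bool.true_eq_false] <;>
  · congr 1
    funext j
    by_cases h : j = i
    · subst h; simp [hfi]
    · simp [h]

lemma cube_eq_of_faces {i : S} {γ γ' : Cube S A}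
    (h0 : face i false γ = face i false γ') (h1 : face i true γ = face i true γ') :
    γ = γ' := by
  rw [← glue_face_self i γ, h0, h1, glue_face_self]

lemma fBB_split (f : Fin 2 → Bool) : fBB (f 0) (f 1) = f := by
  funext j
  have : j = 0 ∨ j = 1 := by omega
  rcases this with h | h <;> subst h <;> simp [fBB]

lemma sqCube_corner (a b c d : A) (b0 b1 : Bool) :
    sqCube a b c d (fBB b0 b1) =
      bif b0 then (bif b1 then d else c) else (bif b1 then b else a) := by
  cases b0 <;> cases b1 <;> simp [sqCube, fBB]

lemma sqCube_self (γ : Cube (Fin 2) A) :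
    sqCube (γ (fBB false false)) (γ (fBB false true)) (γ (fBB true false)) (γ (fBB true true))
      = γ := by
  funext f
  rw [← fBB_split f, sqCube_corner]
  cases f 0 <;> cases f 1 <;> simp

end Stmt14Sq

section Stmt14NiceP

variable {A : Type u} {σ : Signature} [Alg σ A]

lemma congr_term {δ : Set (A × A)} (hδ : IsCongruence σ δ) {k : ℕ} (T : Term σ k)
    (x y : Fin k → A) (h : ∀ j, (x j, y j) ∈ δ) : (T.eval x, T.eval y) ∈ δ := by
  induction T with
  | var i => exact h i
  | app o ts ih => exact hδ.2.2.2 o _ _ fun j => ih j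

def quadOp (o : σ.ops) (q : Fin (σ.arity o) → (A × A) × (A × A)) : (A × A) × (A × A) :=
  ((Alg.interp (A := A) o fun k => (q k).1.1, Alg.interp (A := A) o fun k => (q k).1.2),
   (Alg.interp (A := A) o fun k => (q k).2.1, Alg.interp (A := A) o fun k => (q k).2.2))

structure NiceP (σ : Signature) (A : Type u) [Alg σ A] (θ δ : Set (A × A))
    (P : Set ((A × A) × (A × A))) : Prop where
  symm : ∀ X Y, (X, Y) ∈ P → (Y, X) ∈ P
  qrefl : ∀ X Y, (X, Y) ∈ P → (X, X) ∈ P ∧ (Y, Y) ∈ P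
  compat : ∀ (o : σ.ops) (q : Fin (σ.arity o) → (A × A) × (A × A)),
      (∀ k, q k ∈ P) → quadOp o q ∈ P
  hD : ∀ x y, (x, y) ∈ θ → (((x, x) : A × A), ((y, y) : A × A)) ∈ P
  hR : ∀ x y, (x, y) ∈ θ → (((x, y) : A × A), ((x, y) : A × A)) ∈ P
  hth : ∀ X Y, (X, Y) ∈ P → (X.1, X.2) ∈ θ ∧ (X.1, Y.1) ∈ θ
  slim : ∀ X Y, (X, Y) ∈ P → ((X.1, Y.1) ∈ δ ↔ (X.2, Y.2) ∈ δ)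

lemma NiceP.compatTerm {θ δ : Set (A × A)} {P : Set ((A × A) × (A × A))}
    (h : NiceP σ A θ δ P) {k : ℕ} (T : Term σ k) (q : Fin k → (A × A) × (A × A))
    (hq : ∀ j, q j ∈ P) :
    ((T.eval (fun j => (q j).1.1), T.eval (fun j => (q j).1.2)),
     (T.eval (fun j => (q j).2.1), T.eval (fun j => (q j).2.2))) ∈ P := by
  induction T with
  | var i => exact hq i
  | app o ts ih =>
      exact h.compat o (fun j =>
        (((ts j).eval fun l => (q l).1.1, (ts j).eval fun l => (q l).1.2),
         ((ts j).eval fun l => (q l).2.1, (ts j).eval fun l => (q l).2.2))) fun j => ih j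

/-- The key Taylor lemma: two P-steps with a common target, whose sources have
δ-related first coordinates, have δ-related second coordinates. -/
lemma NiceP.key {θ δ : Set (A × A)} {P : Set ((A × A) × (A × A))}
    (h : NiceP σ A θ δ P) (hTay : IsTaylorAlg σ A)
    (hθe : IsCongruence σ θ) (hδe : IsCongruence σ δ)
    {X Y Z : A × A} (hXY : (X, Y) ∈ P) (hZY : (Z, Y) ∈ P)
    (h1 : (X.1, Z.1) ∈ δ) : (X.2, Z.2) ∈ δ := by
  obtain ⟨x1, x2⟩ := X
  obtain ⟨y1, y2⟩ := Y
  obtain ⟨z1, z2⟩ := Z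
  simp only at h1 ⊢
  obtain ⟨m, t, hidem, hcoord⟩ := hTay
  -- θ-facts
  have hθr := hθe.1
  have hθs := hθe.2.1
  have hθt := hθe.2.2.1
  have hx12 : (x1, x2) ∈ θ := (h.hth _ _ hXY).1
  have hx1y1 : (x1, y1) ∈ θ := (h.hth _ _ hXY).2
  have hy12 : (y1, y2) ∈ θ := (h.hth _ _ (h.symm _ _ hXY)).1
  have hz12 : (z1, z2) ∈ θ := (h.hth _ _ hZY).1
  have hz1y1 : (z1, y1) ∈ θ := (h.hth _ _ hZY).2
  have hz2x2 : (z2, x2) ∈ θ := by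
    apply hθt _ z1 _ (hθs _ _ hz12)
    apply hθt _ y1 _ hz1y1
    exact hθt _ x1 _ (hθs _ _ hx1y1) hx12
  have hy2x2 : (y2, x2) ∈ θ := by
    apply hθt _ y1 _ (hθs _ _ hy12)
    exact hθt _ x1 _ (hθs _ _ hx1y1) hx12
  -- the diamond step
  have diamond : ∀ (E : Fin (m + 1)) (w' : Fin (m + 1) → A), (∀ i, (w' i, x2) ∈ θ) →
      (t.eval (fun i => if i = E then z2 else w' i),
       t.eval (fun i => if i = E then x2 else w' i)) ∈ δ := by
    intro E w' hw'
    obtain ⟨u, v, huE, hvE, hid⟩ := hcoord E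
    -- first big application
    have hqP : ∀ i, (if i = E then ((z1, z2), (y1, y2)) else
        ((bif u i then y1 else x1, bif u i then y2 else x2),
         (bif v i then y1 else x1, bif v i then y2 else x2))) ∈ P := by
      intro i
      by_cases hiE : i = E
      · simpa [hiE] using hZY
      · simp only [hiE, if_false]
        cases hu : u i <;> cases hv : v i <;> simp only [cond_false, cond_true]
        · exact (h.qrefl _ _ hXY).1
        · exact hXY
        · exact h.symm _ _ hXY
        · exact (h.qrefl _ _ hXY).2
    have hbig := h.compatTerm t _ hqP
    set L : Fin (m + 1) → A := fun i => if i = E then z1 else bif u i then y1 else x1 with hL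
    set Sfun : Fin (m + 1) → A := fun i => if i = E then z2 else bif u i then y2 else x2 with hS
    have eL : (fun i => ((if i = E then ((z1, z2), (y1, y2)) else
        ((bif u i then y1 else x1, bif u i then y2 else x2),
         (bif v i then y1 else x1, bif v i then y2 else x2))) : (A × A) × (A × A)).1.1) = L := by
      funext i; by_cases hiE : i = E <;> simp [hiE, hL]
    have eS : (fun i => ((if i = E then ((z1, z2), (y1, y2)) else
        ((bif u i then y1 else x1, bif u i then y2 else x2),
         (bif v i then y1 else x1, bif v i then y2 else x2))) : (A × A) × (A × A)).1.2) = Sfun := by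
      funext i; by_cases hiE : i = E <;> simp [hiE, hS]
    have eR : (fun i => ((if i = E then ((z1, z2), (y1, y2)) else
        ((bif u i then y1 else x1, bif u i then y2 else x2),
         (bif v i then y1 else x1, bif v i then y2 else x2))) : (A × A) × (A × A)).2.1)
        = fun i => bif v i then y1 else x1 := by
      funext i; by_cases hiE : i = E <;> simp [hiE, hvE]
    have eS' : (fun i => ((if i = E then ((z1, z2), (y1, y2)) else
        ((bif u i then y1 else x1, bif u i then y2 else x2),
         (bif v i then y1 else x1, bif v i then y2 else x2))) : (A × A) × (A × A)).2.2)
        = fun i => bif v i then y2 else x2 := by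
      funext i; by_cases hiE : i = E <;> simp [hiE, hvE]
    rw [eL, eS, eR, eS'] at hbig
    -- first components are δ-related
    have hfirst : (t.eval L, t.eval (fun i => bif v i then y1 else x1)) ∈ δ := by
      rw [← hid x1 y1]
      apply congr_term hδe t
      intro j
      by_cases hjE : j = E
      · subst hjE; simp only [hL, if_pos rfl, huE, cond_false]
        exact hδe.2.1 _ _ h1
      · simp only [hL, hjE, if_false]
        exact hδe.1 _
    have hsecond := (h.slim _ _ hbig).1 hfirst
    -- rewrite the right side to the u-pattern
    rw [← hid x2 y2] at hsecond
    -- hsecond : (t.eval Sfun, t.eval (fun i => bif u i then y2 else x2)) ∈ δ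
    -- now the TC step
    have hq2P : ∀ i, (if i = E then (((z2, z2) : A × A), ((x2, x2) : A × A)) else
        (((Sfun i, w' i) : A × A), ((Sfun i, w' i) : A × A))) ∈ P := by
      intro i
      by_cases hiE : i = E
      · simp only [hiE, if_pos rfl]
        exact h.hD z2 x2 hz2x2
      · simp only [hiE, if_false]
        apply h.hR
        have hSix2 : (Sfun i, x2) ∈ θ := by
          simp only [hS, hiE, if_false]
          cases u i
          · simpa using hθr x2
          · simpa using hy2x2
        exact hθt _ x2 _ hSix2 (hθs _ _ (hw' i))
    have hbig2 := h.compatTerm t _ hq2P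
    have f11 : (fun i => ((if i = E then (((z2, z2) : A × A), ((x2, x2) : A × A)) else
        (((Sfun i, w' i) : A × A), ((Sfun i, w' i) : A × A))) : (A × A) × (A × A)).1.1)
        = Sfun := by
      funext i; by_cases hiE : i = E <;> simp [hiE, hS]
    have f21 : (fun i => ((if i = E then (((z2, z2) : A × A), ((x2, x2) : A × A)) else
        (((Sfun i, w' i) : A × A), ((Sfun i, w' i) : A × A))) : (A × A) × (A × A)).2.1)
        = fun i => bif u i then y2 else x2 := by
      funext i; by_cases hiE : i = E
      · subst hiE; simp [huE, hS]
      · simp [hiE, hS]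
    have f12 : (fun i => ((if i = E then (((z2, z2) : A × A), ((x2, x2) : A × A)) else
        (((Sfun i, w' i) : A × A), ((Sfun i, w' i) : A × A))) : (A × A) × (A × A)).1.2)
        = fun i => if i = E then z2 else w' i := by
      funext i; by_cases hiE : i = E <;> simp [hiE]
    have f22 : (fun i => ((if i = E then (((z2, z2) : A × A), ((x2, x2) : A × A)) else
        (((Sfun i, w' i) : A × A), ((Sfun i, w' i) : A × A))) : (A × A) × (A × A)).2.2)
        = fun i => if i = E then x2 else w' i := by
      funext i; by_cases hiE : i = E <;> simp [hiE]
    rw [f11, f21, f12, f22] at hbig2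
    exact (h.slim _ _ hbig2).1 hsecond
  -- final induction along the Taylor coordinates
  have main : ∀ j : ℕ, j ≤ m + 1 →
      (x2, t.eval (fun i : Fin (m + 1) => if i.val < j then z2 else x2)) ∈ δ := by
    intro j
    induction j with
    | zero =>
        intro _
        have : (fun i : Fin (m + 1) => if i.val < 0 then z2 else x2) = fun _ => x2 := by
          funext i; simp
        rw [this, hidem]
        exact hδe.1 x2
    | succ j ih =>
        intro hj
        have hjm : j < m + 1 := hj
        have prev := ih (Nat.le_of_lt hjm)
        have hdj := diamond ⟨j, hjm⟩ (fun i => if i.val < j then z2 else x2)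
          (fun i => by
            by_cases hij : i.val < j
            · simp only [hij, if_pos]
              exact hz2x2
            · simp only [hij, if_neg, if_false]
              exact hθr x2)
        have e1 : (fun i : Fin (m + 1) => if i = ⟨j, hjm⟩ then x2 else if i.val < j then z2 else x2)
            = fun i : Fin (m + 1) => if i.val < j then z2 else x2 := by
          funext i
          by_cases hiE : i = ⟨j, hjm⟩
          · subst hiE; simp
          · simp [hiE]
        have e2 : (fun i : Fin (m + 1) => if i = ⟨j, hjm⟩ then z2 else if i.val < j then z2 else x2)
            = fun i : Fin (m + 1) => if i.val < j + 1 then z2 else x2 := by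
          funext i
          by_cases hiE : i = ⟨j, hjm⟩
          · subst hiE; simp
          · have hne : i.val ≠ j := fun hh => hiE (Fin.ext hh)
            have : (i.val < j + 1) = (i.val < j) := by
              apply propext; constructor <;> intro hh <;> omega
            simp [hiE, this]
        rw [e1, e2] at hdj
        exact hδe.2.2.1 _ _ _ prev (hδe.2.1 _ _ hdj)
  have fin := main (m + 1) (le_refl _)
  have : (fun i : Fin (m + 1) => if i.val < m + 1 then z2 else x2) = fun _ => z2 := by
    funext i; simp [i.isLt]
  rw [this, hidem] at fin
  exact fin

end Stmt14NiceP

section Stmt14Comp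

variable {A : Type u} {σ : Signature} [Alg σ A] {θ δ : Set (A × A)}
variable {P : Set ((A × A) × (A × A))}

def swapP (P : Set ((A × A) × (A × A))) : Set ((A × A) × (A × A)) :=
  {p | ((p.1.2, p.1.1), (p.2.2, p.2.1)) ∈ P}

lemma NiceP.swap (h : NiceP σ A θ δ P) (hθe : IsCongruence σ θ) :
    NiceP σ A θ δ (swapP P) := by
  constructor
  · intro X Y hXY; exact h.symm _ _ hXY
  · intro X Y hXY; exact h.qrefl _ _ hXY
  · intro o q hq
    exact h.compat o (fun k => (((q k).1.2, (q k).1.1), ((q k).2.2, (q k).2.1))) hq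
  · intro x y hxy; exact h.hD x y hxy
  · intro x y hxy; exact h.hR y x (hθe.2.1 _ _ hxy)
  · intro X Y hXY
    have h1 := h.hth _ _ hXY
    have h2 := h.hth _ _ (h.symm _ _ hXY)
    constructor
    · exact hθe.2.1 _ _ h1.1
    · -- (X.1, Y.1) ∈ θ from X.1 θ X.2 θ Y.2 θ Y.1
      apply hθe.2.2.1 _ X.2 _ (hθe.2.1 _ _ h1.1)
      apply hθe.2.2.1 _ Y.2 _ h1.2
      exact h2.1
  · intro X Y hXY; exact (h.slim _ _ hXY).symm

lemma NiceP.key' (h : NiceP σ A θ δ P) (hTay : IsTaylorAlg σ A)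
    (hθe : IsCongruence σ θ) (hδe : IsCongruence σ δ)
    {X Y Z : A × A} (hXY : (X, Y) ∈ P) (hZY : (Z, Y) ∈ P)
    (h2 : (X.2, Z.2) ∈ δ) : (X.1, Z.1) ∈ δ := by
  have hs := h.swap hθe
  exact hs.key hTay hθe hδe (X := (X.2, X.1)) (Y := (Y.2, Y.1)) (Z := (Z.2, Z.1))
    hXY hZY h2

def compP (P : Set ((A × A) × (A × A))) : Set ((A × A) × (A × A)) :=
  {p | ∃ Y, (p.1, Y) ∈ P ∧ (Y, p.2) ∈ P}

lemma NiceP.comp (h : NiceP σ A θ δ P) (hTay : IsTaylorAlg σ A)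
    (hθe : IsCongruence σ θ) (hδe : IsCongruence σ δ) :
    NiceP σ A θ δ (compP P) := by
  constructor
  · rintro X Z ⟨Y, h1, h2⟩
    exact ⟨Y, h.symm _ _ h2, h.symm _ _ h1⟩
  · rintro X Z ⟨Y, h1, h2⟩
    exact ⟨⟨X, (h.qrefl _ _ h1).1, (h.qrefl _ _ h1).1⟩,
           ⟨Z, (h.qrefl _ _ h2).2, (h.qrefl _ _ h2).2⟩⟩
  · intro o q hq
    choose Y h1 h2 using hq
    refine ⟨(Alg.interp (A := A) o fun k => (Y k).1, Alg.interp (A := A) o fun k => (Y k).2),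
      ?_, ?_⟩
    · exact h.compat o (fun k => ((q k).1, Y k)) h1
    · exact h.compat o (fun k => (Y k, (q k).2)) h2
  · intro x y hxy
    exact ⟨(x, x), h.hD x x (hθe.1 x), h.hD x y hxy⟩
  · intro x y hxy
    exact ⟨(x, y), h.hR x y hxy, h.hR x y hxy⟩
  · rintro X Z ⟨Y, h1, h2⟩
    refine ⟨(h.hth _ _ h1).1, ?_⟩
    exact hθe.2.2.1 _ Y.1 _ (h.hth _ _ h1).2 (h.hth _ _ h2).2
  · rintro X Z ⟨Y, h1, h2⟩
    have h2' := h.symm _ _ h2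
    constructor
    · intro hd; exact h.key hTay hθe hδe h1 h2' hd
    · intro hd; exact h.key' hTay hθe hδe h1 h2' hd

def iterP (P : Set ((A × A) × (A × A))) : ℕ → Set ((A × A) × (A × A))
  | 0 => P
  | n + 1 => compP (iterP P n)

lemma NiceP.iter (h : NiceP σ A θ δ P) (hTay : IsTaylorAlg σ A)
    (hθe : IsCongruence σ θ) (hδe : IsCongruence σ δ) :
    ∀ n, NiceP σ A θ δ (iterP P n) := by
  intro n
  induction n with
  | zero => exact h
  | succ n ih => exact ih.comp hTay hθe hδe

lemma iterP_sub (h : NiceP σ A θ δ P) (hTay : IsTaylorAlg σ A)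
    (hθe : IsCongruence σ θ) (hδe : IsCongruence σ δ) :
    ∀ n, iterP P n ⊆ iterP P (n + 1) := by
  intro n X hX
  exact ⟨X.1, ((h.iter hTay hθe hδe n).qrefl _ _ hX).1, hX⟩

lemma NiceP.transGen_slim (h : NiceP σ A θ δ P) (hTay : IsTaylorAlg σ A)
    (hθe : IsCongruence σ θ) (hδe : IsCongruence σ δ) :
    ∀ X Y : A × A, Relation.TransGen (fun a b => (a, b) ∈ P) X Y →
      ((X.1, Y.1) ∈ δ ↔ (X.2, Y.2) ∈ δ) := by
  have hsub : ∀ n, P ⊆ iterP P n := by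
    intro n
    induction n with
    | zero => exact fun _ hx => hx
    | succ n ih => exact fun X hX => iterP_sub h hTay hθe hδe n (ih hX)
  have hcover : ∀ X Y : A × A, Relation.TransGen (fun a b => (a, b) ∈ P) X Y →
      ∃ n, (X, Y) ∈ iterP P n := by
    intro X Y hXY
    induction hXY with
    | single hs => exact ⟨0, hs⟩
    | tail _ hs ih =>
        obtain ⟨n, hn⟩ := ih
        exact ⟨n + 1, ⟨_, hn, hsub n hs⟩⟩
  intro X Y hXY
  obtain ⟨n, hn⟩ := hcover X Y hXY
  exact (h.iter hTay hθe hδe n).slim _ _ hn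

end Stmt14Comp

section Stmt14Bridge

variable {A : Type u} {σ : Signature} [Alg σ A]

/-- chains for a pair relation -/
def isChain (P : Set ((A × A) × (A × A))) (n : ℕ) (f : ℕ → A × A) : Prop :=
  ∀ j < n, (f j, f (j + 1)) ∈ P

lemma tg_to_chain {P : Set ((A × A) × (A × A))} {X Y : A × A}
    (h : Relation.TransGen (fun a b => (a, b) ∈ P) X Y) :
    ∃ n f, 0 < n ∧ f 0 = X ∧ f n = Y ∧ isChain P n f := by
  induction h with
  | @single b hs =>
      refine ⟨1, fun j => if j = 0 then X else b, Nat.one_pos, by simp, by simp, ?_⟩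
      intro j hj
      have hj0 : j = 0 := by omega
      subst hj0
      simpa using hs
  | @tail b c _ hs ih =>
      obtain ⟨n, f, hn, h0, hE, hch⟩ := ih
      refine ⟨n + 1, fun j => if j ≤ n then f j else c, by omega, ?_, ?_, ?_⟩
      · simpa [Nat.zero_le] using h0
      · simp
      · intro j hj
        by_cases hjn : j < n
        · have e1 : j ≤ n := by omega
          have e2 : j + 1 ≤ n := by omega
          simp only [e1, e2, if_pos]
          exact hch j hjn
        · have hjn' : j = n := by omega
          subst hjn'
          have e2 : ¬ (j + 1 ≤ j) := by omega
          simp only [le_refl, if_pos, e2, if_false]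
          rw [hE]
          exact hs

lemma chain_to_tg' {P : Set ((A × A) × (A × A))} :
    ∀ (n : ℕ) (f : ℕ → A × A), 0 < n → isChain P n f →
      Relation.TransGen (fun a b => (a, b) ∈ P) (f 0) (f n) := by
  intro n
  induction n with
  | zero => intro f h; omega
  | succ k ih =>
      intro f _ hch
      rcases Nat.eq_zero_or_pos k with hk | hk
      · subst hk
        exact Relation.TransGen.single (hch 0 Nat.one_pos)
      · exact Relation.TransGen.tail (ih f hk (fun j hj => hch j (by omega)))
          (hch k (by omega))

lemma chain_to_tg {P : Set ((A × A) × (A × A))} {X Y : A × A}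
    (n : ℕ) (f : ℕ → A × A) (hn : 0 < n) (h0 : f 0 = X) (hE : f n = Y)
    (hch : isChain P n f) :
    Relation.TransGen (fun a b => (a, b) ∈ P) X Y := by
  rw [← h0, ← hE]
  exact chain_to_tg' n f hn hch

lemma chain_pad {P : Set ((A × A) × (A × A))}
    (hq : ∀ X Y : A × A, (X, Y) ∈ P → (X, X) ∈ P ∧ (Y, Y) ∈ P)
    {n : ℕ} {f : ℕ → A × A} (hn : 0 < n) (hch : isChain P n f) (N : ℕ) (hN : n ≤ N) :
    isChain P N (fun j => f (min j n)) := by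
  intro j hj
  by_cases hjn : j < n
  · have e1 : min j n = j := by omega
    have e2 : min (j + 1) n = j + 1 := by omega
    simp only [e1, e2]
    exact hch j hjn
  · have e1 : min j n = n := by omega
    have e2 : min (j + 1) n = n := by omega
    simp only [e1, e2]
    have hstep := hch (n - 1) (by omega)
    have hn1 : n - 1 + 1 = n := by omega
    rw [hn1] at hstep
    exact (hq _ _ hstep).2

/-- transitive closures of compatible quasireflexive pair relations are compatible -/
lemma transGen_quad {P : Set ((A × A) × (A × A))}
    (hcompat : ∀ (o : σ.ops) (q : Fin (σ.arity o) → (A × A) × (A × A)),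
      (∀ k, q k ∈ P) → quadOp o q ∈ P)
    (hq : ∀ X Y : A × A, (X, Y) ∈ P → (X, X) ∈ P ∧ (Y, Y) ∈ P)
    (o : σ.ops) (X Y : Fin (σ.arity o) → A × A)
    (hch : ∀ k, Relation.TransGen (fun a b => (a, b) ∈ P) (X k) (Y k)) :
    Relation.TransGen (fun a b => (a, b) ∈ P)
      (Alg.interp (A := A) o fun k => (X k).1, Alg.interp (A := A) o fun k => (X k).2)
      (Alg.interp (A := A) o fun k => (Y k).1, Alg.interp (A := A) o fun k => (Y k).2) := by
  have hchains := fun k => tg_to_chain (hch k)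
  choose n f hn h0 hE hich using hchains
  set N : ℕ := max 1 (Finset.univ.sup n) with hN
  have hN1 : 0 < N := by
    have := le_max_left 1 (Finset.univ.sup n)
    omega
  have hNk : ∀ k, n k ≤ N := by
    intro k
    calc n k ≤ Finset.univ.sup n := Finset.le_sup (Finset.mem_univ k)
    _ ≤ N := le_max_right _ _
  have hpad : ∀ k, isChain P N (fun j => f k (min j (n k))) :=
    fun k => chain_pad hq (hn k) (hich k) N (hNk k)
  set F : ℕ → A × A := fun j =>
    (Alg.interp (A := A) o fun k => (f k (min j (n k))).1,
     Alg.interp (A := A) o fun k => (f k (min j (n k))).2) with hF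
  have hFch : isChain P N F := by
    intro j hj
    have := hcompat o (fun k => (f k (min j (n k)), f k (min (j + 1) (n k))))
      (fun k => hpad k j hj)
    exact this
  have hF0 : F 0 = (Alg.interp (A := A) o fun k => (X k).1,
      Alg.interp (A := A) o fun k => (X k).2) := by
    simp only [hF]
    congr 1 <;> · congr 1; funext k; rw [min_eq_left (Nat.zero_le _), h0]
  have hFN : F N = (Alg.interp (A := A) o fun k => (Y k).1,
      Alg.interp (A := A) o fun k => (Y k).2) := by
    simp only [hF]
    congr 1 <;> · congr 1; funext k; rw [min_eq_right (hNk k), hE]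
  exact chain_to_tg N F hN1 hF0 hFN hFch

end Stmt14Bridge

section Stmt14Cols

variable {A : Type u} {σ : Signature} [Alg σ A]

def mkCol (X : A × A) : Cube {x : Fin 2 // x ≠ (1 : Fin 2)} A :=
  fun g => bif g w0 then X.2 else X.1

def mkRow (X : A × A) : Cube {x : Fin 2 // x ≠ (0 : Fin 2)} A :=
  fun g => bif g w1 then X.2 else X.1

def colOf (b : Bool) (γ : Cube (Fin 2) A) : A × A := (γ (fBB false b), γ (fBB true b))

def rowOf (b : Bool) (γ : Cube (Fin 2) A) : A × A := (γ (fBB b false), γ (fBB b true))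

def colP (R : Set (Cube (Fin 2) A)) : Set ((A × A) × (A × A)) :=
  {p | sqCube p.1.1 p.2.1 p.1.2 p.2.2 ∈ R}

def rowP (R : Set (Cube (Fin 2) A)) : Set ((A × A) × (A × A)) :=
  {p | sqCube p.1.1 p.1.2 p.2.1 p.2.2 ∈ R}

lemma face1_mkCol (b : Bool) (γ : Cube (Fin 2) A) :
    face (1 : Fin 2) b γ = mkCol (colOf b γ) := by
  funext g
  rw [face1_eval]
  cases hg : g w0 <;> simp [mkCol, colOf, hg]

lemma face0_mkRow (b : Bool) (γ : Cube (Fin 2) A) :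
    face (0 : Fin 2) b γ = mkRow (rowOf b γ) := by
  funext g
  rw [face0_eval]
  cases hg : g w1 <;> simp [mkRow, rowOf, hg]

lemma sq_colOf (γ : Cube (Fin 2) A) :
    sqCube (colOf false γ).1 (colOf true γ).1 (colOf false γ).2 (colOf true γ).2 = γ :=
  sqCube_self γ

lemma sq_rowOf (γ : Cube (Fin 2) A) :
    sqCube (rowOf false γ).1 (rowOf false γ).2 (rowOf true γ).1 (rowOf true γ).2 = γ :=
  sqCube_self γ

lemma colOf_sq (b : Bool) (X Y : A × A) :
    colOf b (sqCube X.1 Y.1 X.2 Y.2) = bif b then Y else X := by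
  cases b <;> · apply Prod.ext <;> simp [colOf, sqCube_corner]

lemma rowOf_sq (b : Bool) (X Y : A × A) :
    rowOf b (sqCube X.1 X.2 Y.1 Y.2) = bif b then Y else X := by
  cases b <;> · apply Prod.ext <;> simp [rowOf, sqCube_corner]

lemma facesRel1_to_colP {R : Set (Cube (Fin 2) A)} {F G : Cube {x : Fin 2 // x ≠ (1 : Fin 2)} A}
    (h : (F, G) ∈ facesRel 1 R) :
    ((F (fun _ => false), F (fun _ => true)), (G (fun _ => false), G (fun _ => true))) ∈ colP R := by
  obtain ⟨γ, hγ, hFG⟩ := h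
  have hF : F = face 1 false γ := congrArg Prod.fst hFG
  have hG : G = face 1 true γ := congrArg Prod.snd hFG
  subst hF hG
  show sqCube _ _ _ _ ∈ R
  have e : ∀ b c, face (1 : Fin 2) b γ (fun _ => c) = γ (fBB c b) := by
    intro b c; rw [face1_eval]
  simp only [e]
  rw [sqCube_self]
  exact hγ

lemma colP_to_facesRel {R : Set (Cube (Fin 2) A)} {X Y : A × A}
    (h : (X, Y) ∈ colP R) : (mkCol X, mkCol Y) ∈ facesRel 1 R := by
  refine ⟨sqCube X.1 Y.1 X.2 Y.2, h, ?_⟩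
  rw [face1_mkCol, face1_mkCol, colOf_sq, colOf_sq]
  rfl

lemma rowP_to_facesRel {R : Set (Cube (Fin 2) A)} {X Y : A × A}
    (h : (X, Y) ∈ rowP R) : (mkRow X, mkRow Y) ∈ facesRel 0 R := by
  refine ⟨sqCube X.1 X.2 Y.1 Y.2, h, ?_⟩
  rw [face0_mkRow, face0_mkRow, rowOf_sq, rowOf_sq]
  rfl

lemma facesRel0_to_rowP {R : Set (Cube (Fin 2) A)} {F G : Cube {x : Fin 2 // x ≠ (0 : Fin 2)} A}
    (h : (F, G) ∈ facesRel 0 R) :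
    ((F (fun _ => false), F (fun _ => true)), (G (fun _ => false), G (fun _ => true))) ∈ rowP R := by
  obtain ⟨γ, hγ, hFG⟩ := h
  have hF : F = face 0 false γ := congrArg Prod.fst hFG
  have hG : G = face 0 true γ := congrArg Prod.snd hFG
  subst hF hG
  show sqCube _ _ _ _ ∈ R
  have e : ∀ b c, face (0 : Fin 2) b γ (fun _ => c) = γ (fBB b c) := by
    intro b c; rw [face0_eval]
  simp only [e]
  rw [sqCube_self]
  exact hγ

lemma mem_dirClosure1_iff {R : Set (Cube (Fin 2) A)} {γ : Cube (Fin 2) A} :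
    γ ∈ dirClosure (1 : Fin 2) R ↔
      Relation.TransGen (fun a b => (a, b) ∈ colP R) (colOf false γ) (colOf true γ) := by
  constructor
  · intro h
    have := Relation.TransGen.lift (p := fun a b : A × A => (a, b) ∈ colP R)
      (f := fun F : Cube {x : Fin 2 // x ≠ (1 : Fin 2)} A => (F (fun _ => false), F (fun _ => true)))
      (fun a b hab => facesRel1_to_colP hab) _ _ h
    have e : ∀ b, ((face (1 : Fin 2) b γ) (fun _ => false), (face (1 : Fin 2) b γ) (fun _ => true))
        = colOf b γ := by
      intro b; rw [face1_eval, face1_eval]; rfl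
    simpa only [e, Function.onFun] using this
  · intro h
    have := Relation.TransGen.lift
      (p := fun a b : Cube {x : Fin 2 // x ≠ (1 : Fin 2)} A => (a, b) ∈ facesRel 1 R)
      (f := fun X : A × A => mkCol X)
      (fun a b hab => colP_to_facesRel hab) _ _ h
    show Relation.TransGen _ _ _
    simpa only [← face1_mkCol, Function.onFun] using this

lemma mem_dirClosure0_iff {R : Set (Cube (Fin 2) A)} {γ : Cube (Fin 2) A} :
    γ ∈ dirClosure (0 : Fin 2) R ↔
      Relation.TransGen (fun a b => (a, b) ∈ rowP R) (rowOf false γ) (rowOf true γ) := by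
  constructor
  · intro h
    have := Relation.TransGen.lift (p := fun a b : A × A => (a, b) ∈ rowP R)
      (f := fun F : Cube {x : Fin 2 // x ≠ (0 : Fin 2)} A => (F (fun _ => false), F (fun _ => true)))
      (fun a b hab => facesRel0_to_rowP hab) _ _ h
    have e : ∀ b, ((face (0 : Fin 2) b γ) (fun _ => false), (face (0 : Fin 2) b γ) (fun _ => true))
        = rowOf b γ := by
      intro b; rw [face0_eval, face0_eval]; rfl
    simpa only [e, Function.onFun] using this
  · intro h
    have := Relation.TransGen.lift
      (p := fun a b : Cube {x : Fin 2 // x ≠ (0 : Fin 2)} A => (a, b) ∈ facesRel 0 R)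
      (f := fun X : A × A => mkRow X)
      (fun a b hab => rowP_to_facesRel hab) _ _ h
    show Relation.TransGen _ _ _
    simpa only [← face0_mkRow, Function.onFun] using this

lemma interp_sq (o : σ.ops) (a b c d : Fin (σ.arity o) → A) :
    (fun f => Alg.interp (A := A) o fun k => sqCube (a k) (b k) (c k) (d k) f)
      = sqCube (Alg.interp (A := A) o a) (Alg.interp (A := A) o b)
          (Alg.interp (A := A) o c) (Alg.interp (A := A) o d) := by
  funext f
  rw [← fBB_split f]
  cases h0 : f 0 <;> cases h1 : f 1 <;> simp only [sqCube_corner, cond_false, cond_true]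

lemma cubeAt1_eq (x y : A) : cubeAt (1 : Fin 2) (x, y) = sqCube x y x y := by
  funext f
  rw [← fBB_split f]
  cases h0 : f 0 <;> cases h1 : f 1 <;>
    simp [cubeAt, sqCube_corner, fBB]

lemma cubeAt0_eq (x y : A) : cubeAt (0 : Fin 2) (x, y) = sqCube x x y y := by
  funext f
  rw [← fBB_split f]
  cases h0 : f 0 <;> cases h1 : f 1 <;>
    simp [cubeAt, sqCube_corner, fBB]

end Stmt14Cols

section Stmt14Good

variable {A : Type u} {σ : Signature} [Alg σ A]

lemma fin2_cases (i : Fin 2) : i = 0 ∨ i = 1 := by omega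

lemma corner_glue1 (C D : Cube {x : Fin 2 // x ≠ (1 : Fin 2)} A) (b c : Bool) :
    glue 1 C D (fBB b c) = (bif c then D else C) (fun _ => b) := by
  have h1 : fBB b c 1 = c := by simp [fBB]
  have h2 : (fun l : {x : Fin 2 // x ≠ (1 : Fin 2)} => fBB b c l.val) = fun _ => b := by
    funext l
    rw [Subsingleton.elim l w0]
    simp [fBB, w0]
  show (if fBB b c 1 then D _ else C _) = _
  rw [h1, h2]
  cases c <;> simp

lemma corner_glue0 (C D : Cube {x : Fin 2 // x ≠ (0 : Fin 2)} A) (b c : Bool) :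
    glue 0 C D (fBB b c) = (bif b then D else C) (fun _ => c) := by
  have h1 : fBB b c 0 = b := by simp [fBB]
  have h2 : (fun l : {x : Fin 2 // x ≠ (0 : Fin 2)} => fBB b c l.val) = fun _ => c := by
    funext l
    rw [Subsingleton.elim l w1]
    simp [fBB, w1]
  show (if fBB b c 0 then D _ else C _) = _
  rw [h1, h2]
  cases b <;> simp

lemma rect_of_corners {θ : Set (A × A)} {ζ : Cube (Fin 2) A}
    (hr0 : rowOf false ζ ∈ θ) (hr1 : rowOf true ζ ∈ θ)
    (hc0 : colOf false ζ ∈ θ) (hc1 : colOf true ζ ∈ θ) :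
    ζ ∈ rectRel (fun _ : Fin 2 => θ) := by
  intro i f
  rcases fin2_cases i with hi | hi <;> subst hi
  · show (face 0 false ζ f, face 0 true ζ f) ∈ θ
    rw [face0_eval, face0_eval]
    cases f w1
    · exact hc0
    · exact hc1
  · show (face 1 false ζ f, face 1 true ζ f) ∈ θ
    rw [face1_eval, face1_eval]
    cases f w0
    · exact hr0
    · exact hr1

lemma rect_row {θ : Set (A × A)} {ζ : Cube (Fin 2) A}
    (h : ζ ∈ rectRel (fun _ : Fin 2 => θ)) (b : Bool) : rowOf b ζ ∈ θ := by
  have := h 1 (fun _ => b)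
  rw [face1_eval, face1_eval] at this
  exact this

lemma rect_col {θ : Set (A × A)} {ζ : Cube (Fin 2) A}
    (h : ζ ∈ rectRel (fun _ : Fin 2 => θ)) (b : Bool) : colOf b ζ ∈ θ := by
  have := h 0 (fun _ => b)
  rw [face0_eval, face0_eval] at this
  exact this

/-- reversing transitive chains of symmetric pair relations -/
lemma tg_symm {P : Set ((A × A) × (A × A))}
    (hsym : ∀ X Y : A × A, (X, Y) ∈ P → (Y, X) ∈ P) {X Y : A × A}
    (h : Relation.TransGen (fun a b => (a, b) ∈ P) X Y) :
    Relation.TransGen (fun a b => (a, b) ∈ P) Y X := by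
  induction h with
  | single hs => exact Relation.TransGen.single (hsym _ _ hs)
  | tail _ hs ih => exact Relation.TransGen.head (hsym _ _ hs) ih

lemma tg_ends {P : Set ((A × A) × (A × A))}
    (hq : ∀ X Y : A × A, (X, Y) ∈ P → (X, X) ∈ P ∧ (Y, Y) ∈ P) {X Y : A × A}
    (h : Relation.TransGen (fun a b => (a, b) ∈ P) X Y) :
    (X, X) ∈ P ∧ (Y, Y) ∈ P := by
  induction h with
  | single hs => exact hq _ _ hs
  | tail _ hs ih => exact ⟨ih.1, (hq _ _ hs).2⟩

lemma tg_theta {θ : Set (A × A)} (hθe : IsCongruence σ θ) {P : Set ((A × A) × (A × A))}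
    (hstep : ∀ X Y : A × A, (X, Y) ∈ P → (X.1, X.2) ∈ θ ∧ (X.1, Y.1) ∈ θ ∧ (X.2, Y.2) ∈ θ)
    {X Y : A × A} (h : Relation.TransGen (fun a b => (a, b) ∈ P) X Y) :
    (X.1, X.2) ∈ θ ∧ (Y.1, Y.2) ∈ θ ∧ (X.1, Y.1) ∈ θ ∧ (X.2, Y.2) ∈ θ := by
  induction h with
  | @single b hs =>
      obtain ⟨h1, h2, h3⟩ := hstep _ _ hs
      refine ⟨h1, ?_, h2, h3⟩
      apply hθe.2.2.1 _ X.1 _ (hθe.2.1 _ _ h2)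
      exact hθe.2.2.1 _ X.2 _ h1 h3
  | @tail b c _ hs ih =>
      obtain ⟨h1, h2, h3⟩ := hstep _ _ hs
      refine ⟨ih.1, ?_, hθe.2.2.1 _ _ _ ih.2.2.1 h2, hθe.2.2.1 _ _ _ ih.2.2.2 h3⟩
      exact hθe.2.2.1 _ _ _ (hθe.2.2.1 _ _ _ (hθe.2.1 _ _ h2) h1) h3

lemma tg_iff {δ : Set (A × A)} {P : Set ((A × A) × (A × A))}
    (hstep : ∀ X Y : A × A, (X, Y) ∈ P → ((X.1, X.2) ∈ δ ↔ (Y.1, Y.2) ∈ δ))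
    {X Y : A × A} (h : Relation.TransGen (fun a b => (a, b) ∈ P) X Y) :
    ((X.1, X.2) ∈ δ ↔ (Y.1, Y.2) ∈ δ) := by
  induction h with
  | single hs => exact hstep _ _ hs
  | tail _ hs ih => exact ih.trans (hstep _ _ hs)

/-- invariant maintained through the closure stages -/
structure Good (σ : Signature) (A : Type u) [Alg σ A] (θ δ : Set (A × A))
    (R : Set (Cube (Fin 2) A)) : Prop where
  compat : CompatCube σ R
  srefl : SRefl R
  ssymm : SSymm R
  hgens : (⋃ i : Fin 2, cubeSet i θ) ⊆ R
  rect : R ⊆ rectRel (fun _ : Fin 2 => θ)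
  cent : ∀ γ ∈ R, ((γ (fBB false false), γ (fBB false true)) ∈ δ ↔
                   (γ (fBB true false), γ (fBB true true)) ∈ δ)

end Stmt14Good

section Stmt14GoodPairs

variable {A : Type u} {σ : Signature} [Alg σ A] {θ δ : Set (A × A)}
variable {R : Set (Cube (Fin 2) A)}

lemma rowOf_sqC (b : Bool) (X Y : A × A) :
    rowOf b (sqCube X.1 Y.1 X.2 Y.2) = bif b then (X.2, Y.2) else (X.1, Y.1) := by
  cases b <;> · apply Prod.ext <;> simp [rowOf, sqCube_corner]

lemma colOf_sqR (b : Bool) (X Y : A × A) :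
    colOf b (sqCube X.1 X.2 Y.1 Y.2) = bif b then (X.2, Y.2) else (X.1, Y.1) := by
  cases b <;> · apply Prod.ext <;> simp [colOf, sqCube_corner]

lemma Good.col_symm (hG : Good σ A θ δ R) {X Y : A × A} (h : (X, Y) ∈ colP R) :
    (Y, X) ∈ colP R := by
  have hf := hG.ssymm 1 _ _ ⟨sqCube X.1 Y.1 X.2 Y.2, h, rfl⟩
  have := facesRel1_to_colP hf
  simpa [face1_eval, sqCube_corner] using this

lemma Good.col_qrefl (hG : Good σ A θ δ R) {X Y : A × A} (h : (X, Y) ∈ colP R) :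
    (X, X) ∈ colP R ∧ (Y, Y) ∈ colP R := by
  have hf := hG.srefl 1 _ _ ⟨sqCube X.1 Y.1 X.2 Y.2, h, rfl⟩
  constructor
  · have := facesRel1_to_colP hf.1
    simpa [face1_eval, sqCube_corner] using this
  · have := facesRel1_to_colP hf.2
    simpa [face1_eval, sqCube_corner] using this

lemma Good.col_compat (hG : Good σ A θ δ R) (o : σ.ops)
    (q : Fin (σ.arity o) → (A × A) × (A × A)) (hq : ∀ k, q k ∈ colP R) :
    quadOp o q ∈ colP R := by
  show sqCube _ _ _ _ ∈ R
  simp only [quadOp]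
  rw [← interp_sq]
  exact hG.compat o (fun k => sqCube ((q k).1.1) ((q k).2.1) ((q k).1.2) ((q k).2.2)) hq

lemma Good.col_hD (hG : Good σ A θ δ R) (x y : A) (hxy : (x, y) ∈ θ) :
    (((x, x) : A × A), ((y, y) : A × A)) ∈ colP R := by
  show sqCube x y x y ∈ R
  rw [← cubeAt1_eq]
  exact hG.hgens (Set.mem_iUnion.2 ⟨1, ⟨(x, y), hxy, rfl⟩⟩)

lemma Good.col_hR (hG : Good σ A θ δ R) (x y : A) (hxy : (x, y) ∈ θ) :
    (((x, y) : A × A), ((x, y) : A × A)) ∈ colP R := by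
  show sqCube x x y y ∈ R
  rw [← cubeAt0_eq]
  exact hG.hgens (Set.mem_iUnion.2 ⟨0, ⟨(x, y), hxy, rfl⟩⟩)

lemma Good.col_hth (hG : Good σ A θ δ R) {X Y : A × A} (h : (X, Y) ∈ colP R) :
    (X.1, X.2) ∈ θ ∧ (X.1, Y.1) ∈ θ ∧ (X.2, Y.2) ∈ θ := by
  have hr := hG.rect h
  refine ⟨?_, ?_, ?_⟩
  · have := rect_col hr false
    rwa [colOf_sq] at this
  · have := rect_row hr false
    rwa [rowOf_sqC] at this
  · have := rect_row hr true
    rwa [rowOf_sqC] at this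

lemma Good.col_slim (hG : Good σ A θ δ R) {X Y : A × A} (h : (X, Y) ∈ colP R) :
    ((X.1, Y.1) ∈ δ ↔ (X.2, Y.2) ∈ δ) := by
  have := hG.cent _ h
  simpa [sqCube_corner] using this

lemma Good.niceCol (hG : Good σ A θ δ R) : NiceP σ A θ δ (colP R) := by
  constructor
  · intro X Y h; exact hG.col_symm h
  · intro X Y h; exact hG.col_qrefl h
  · intro o q hq; exact hG.col_compat o q hq
  · intro x y h; exact hG.col_hD x y h
  · intro x y h; exact hG.col_hR x y h
  · intro X Y h; exact ⟨(hG.col_hth h).1, (hG.col_hth h).2.1⟩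
  · intro X Y h; exact hG.col_slim h

-- row versions
lemma Good.row_symm (hG : Good σ A θ δ R) {X Y : A × A} (h : (X, Y) ∈ rowP R) :
    (Y, X) ∈ rowP R := by
  have hf := hG.ssymm 0 _ _ ⟨sqCube X.1 X.2 Y.1 Y.2, h, rfl⟩
  have := facesRel0_to_rowP hf
  simpa [face0_eval, sqCube_corner] using this

lemma Good.row_qrefl (hG : Good σ A θ δ R) {X Y : A × A} (h : (X, Y) ∈ rowP R) :
    (X, X) ∈ rowP R ∧ (Y, Y) ∈ rowP R := by
  have hf := hG.srefl 0 _ _ ⟨sqCube X.1 X.2 Y.1 Y.2, h, rfl⟩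
  constructor
  · have := facesRel0_to_rowP hf.1
    simpa [face0_eval, sqCube_corner] using this
  · have := facesRel0_to_rowP hf.2
    simpa [face0_eval, sqCube_corner] using this

lemma Good.row_compat (hG : Good σ A θ δ R) (o : σ.ops)
    (q : Fin (σ.arity o) → (A × A) × (A × A)) (hq : ∀ k, q k ∈ rowP R) :
    quadOp o q ∈ rowP R := by
  show sqCube _ _ _ _ ∈ R
  simp only [quadOp]
  rw [← interp_sq]
  exact hG.compat o (fun k => sqCube ((q k).1.1) ((q k).1.2) ((q k).2.1) ((q k).2.2)) hq

lemma Good.row_hD (hG : Good σ A θ δ R) (x y : A) (hxy : (x, y) ∈ θ) :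
    (((x, x) : A × A), ((y, y) : A × A)) ∈ rowP R := by
  show sqCube x x y y ∈ R
  rw [← cubeAt0_eq]
  exact hG.hgens (Set.mem_iUnion.2 ⟨0, ⟨(x, y), hxy, rfl⟩⟩)

lemma Good.row_hth (hG : Good σ A θ δ R) {X Y : A × A} (h : (X, Y) ∈ rowP R) :
    (X.1, X.2) ∈ θ ∧ (X.1, Y.1) ∈ θ ∧ (X.2, Y.2) ∈ θ := by
  have hr := hG.rect h
  refine ⟨?_, ?_, ?_⟩
  · have := rect_row hr false
    rwa [rowOf_sq] at this
  · have := rect_col hr false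
    rwa [colOf_sqR] at this
  · have := rect_col hr true
    rwa [colOf_sqR] at this

lemma Good.row_cent (hG : Good σ A θ δ R) {X Y : A × A} (h : (X, Y) ∈ rowP R) :
    ((X.1, X.2) ∈ δ ↔ (Y.1, Y.2) ∈ δ) := by
  have := hG.cent _ h
  simpa [sqCube_corner] using this

-- cross transport maps
lemma Good.col_swap (hG : Good σ A θ δ R) {X Y : A × A} (h : (X, Y) ∈ colP R) :
    (((X.2, X.1) : A × A), ((Y.2, Y.1) : A × A)) ∈ colP R := by
  have hf := hG.ssymm 0 _ _ ⟨sqCube X.1 Y.1 X.2 Y.2, h, rfl⟩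
  have := facesRel0_to_rowP hf
  simpa [face0_eval, sqCube_corner, rowP, colP] using this

lemma Good.col_diag (hG : Good σ A θ δ R) {X Y : A × A} (h : (X, Y) ∈ colP R) :
    (((X.1, X.1) : A × A), ((Y.1, Y.1) : A × A)) ∈ colP R ∧
    (((X.2, X.2) : A × A), ((Y.2, Y.2) : A × A)) ∈ colP R := by
  have hf := hG.srefl 0 _ _ ⟨sqCube X.1 Y.1 X.2 Y.2, h, rfl⟩
  constructor
  · have := facesRel0_to_rowP hf.1
    simpa [face0_eval, sqCube_corner, rowP, colP] using this
  · have := facesRel0_to_rowP hf.2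
    simpa [face0_eval, sqCube_corner, rowP, colP] using this

lemma Good.row_swap (hG : Good σ A θ δ R) {X Y : A × A} (h : (X, Y) ∈ rowP R) :
    (((X.2, X.1) : A × A), ((Y.2, Y.1) : A × A)) ∈ rowP R := by
  have hf := hG.ssymm 1 _ _ ⟨sqCube X.1 X.2 Y.1 Y.2, h, rfl⟩
  have := facesRel1_to_colP hf
  simpa [face1_eval, sqCube_corner, rowP, colP] using this

lemma Good.row_diag (hG : Good σ A θ δ R) {X Y : A × A} (h : (X, Y) ∈ rowP R) :
    (((X.1, X.1) : A × A), ((Y.1, Y.1) : A × A)) ∈ rowP R ∧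
    (((X.2, X.2) : A × A), ((Y.2, Y.2) : A × A)) ∈ rowP R := by
  have hf := hG.srefl 1 _ _ ⟨sqCube X.1 X.2 Y.1 Y.2, h, rfl⟩
  constructor
  · have := facesRel1_to_colP hf.1
    simpa [face1_eval, sqCube_corner, rowP, colP] using this
  · have := facesRel1_to_colP hf.2
    simpa [face1_eval, sqCube_corner, rowP, colP] using this

end Stmt14GoodPairs

section Stmt14Closure

variable {A : Type u} {σ : Signature} [Alg σ A] {θ δ : Set (A × A)}
variable {R : Set (Cube (Fin 2) A)}

lemma facesRel_intro {S : Set (Cube (Fin 2) A)} {i : Fin 2} {γ : Cube (Fin 2) A} (h : γ ∈ S) :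
    (face i false γ, face i true γ) ∈ facesRel i S := ⟨γ, h, rfl⟩

lemma facesRel_glue {S : Set (Cube (Fin 2) A)} {i : Fin 2}
    {C D : Cube {x : Fin 2 // x ≠ i} A} (h : glue i C D ∈ S) :
    (C, D) ∈ facesRel i S := ⟨glue i C D, h, by simp [face_glue]⟩

lemma sub_dirClosure (i : Fin 2) (R : Set (Cube (Fin 2) A)) : R ⊆ dirClosure i R :=
  fun _ h => Relation.TransGen.single (facesRel_intro h)

lemma colOf_glue1 (C D : Cube {x : Fin 2 // x ≠ (1 : Fin 2)} A) (c : Bool) :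
    colOf c (glue 1 C D) =
      ((bif c then D else C) (fun _ => false), (bif c then D else C) (fun _ => true)) := by
  apply Prod.ext <;> simp [colOf, corner_glue1]

lemma rowOf_glue1 (C D : Cube {x : Fin 2 // x ≠ (1 : Fin 2)} A) (b : Bool) :
    rowOf b (glue 1 C D) = (C (fun _ => b), D (fun _ => b)) := by
  apply Prod.ext <;> simp [rowOf, corner_glue1]

lemma rowOf_glue0 (C D : Cube {x : Fin 2 // x ≠ (0 : Fin 2)} A) (b : Bool) :
    rowOf b (glue 0 C D) =
      ((bif b then D else C) (fun _ => false), (bif b then D else C) (fun _ => true)) := by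
  apply Prod.ext <;> simp [rowOf, corner_glue0]

lemma colOf_glue0 (C D : Cube {x : Fin 2 // x ≠ (0 : Fin 2)} A) (c : Bool) :
    colOf c (glue 0 C D) = (C (fun _ => c), D (fun _ => c)) := by
  apply Prod.ext <;> simp [colOf, corner_glue0]

lemma face1_pair (b : Bool) (γ : Cube (Fin 2) A) :
    ((face (1 : Fin 2) b γ) (fun _ => false), (face (1 : Fin 2) b γ) (fun _ => true))
      = colOf b γ := by
  rw [face1_eval, face1_eval]; rfl

lemma face0_pair (b : Bool) (γ : Cube (Fin 2) A) :
    ((face (0 : Fin 2) b γ) (fun _ => false), (face (0 : Fin 2) b γ) (fun _ => true))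
      = rowOf b γ := by
  rw [face0_eval, face0_eval]; rfl

lemma closure1_rect (hG : Good σ A θ δ R) (hθe : IsCongruence σ θ) :
    dirClosure (1 : Fin 2) R ⊆ rectRel (fun _ : Fin 2 => θ) := by
  intro γ h
  have htg := mem_dirClosure1_iff.1 h
  have facts := tg_theta hθe (fun X Y hs => hG.col_hth hs) htg
  exact rect_of_corners facts.2.2.1 facts.2.2.2 facts.1 facts.2.1

lemma closure0_rect (hG : Good σ A θ δ R) (hθe : IsCongruence σ θ) :
    dirClosure (0 : Fin 2) R ⊆ rectRel (fun _ : Fin 2 => θ) := by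
  intro γ h
  have htg := mem_dirClosure0_iff.1 h
  have facts := tg_theta hθe (fun X Y hs => hG.row_hth hs) htg
  exact rect_of_corners facts.1 facts.2.1 facts.2.2.1 facts.2.2.2

lemma Good.closure1 (hG : Good σ A θ δ R) (hTay : IsTaylorAlg σ A)
    (hθe : IsCongruence σ θ) (hδe : IsCongruence σ δ) :
    Good σ A θ δ (dirClosure (1 : Fin 2) R) := by
  have N := hG.niceCol
  constructor
  · -- compat
    intro o γk hk
    have hk' := fun k => mem_dirClosure1_iff.1 (hk k)
    have := transGen_quad N.compat N.qrefl o
      (fun k => colOf false (γk k)) (fun k => colOf true (γk k)) hk'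
    exact mem_dirClosure1_iff.2 this
  · -- srefl
    intro i
    rcases fin2_cases i with hi | hi <;> subst hi
    · rintro F G ⟨γ, hγ, hp⟩
      injection hp with hF hG2
      subst hF; subst hG2
      have hrect := closure1_rect hG hθe hγ
      constructor
      · apply facesRel_glue (C := face 0 false γ) (D := face 0 false γ)
        apply mem_dirClosure1_iff.2
        rw [colOf_glue0, colOf_glue0]
        have e : ∀ c : Bool, face (0 : Fin 2) false γ (fun _ => c) = γ (fBB false c) := by
          intro c; rw [face0_eval]
        rw [e false, e true]
        apply Relation.TransGen.single
        apply N.hD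
        exact rect_row hrect false
      · apply facesRel_glue (C := face 0 true γ) (D := face 0 true γ)
        apply mem_dirClosure1_iff.2
        rw [colOf_glue0, colOf_glue0]
        have e : ∀ c : Bool, face (0 : Fin 2) true γ (fun _ => c) = γ (fBB true c) := by
          intro c; rw [face0_eval]
        rw [e false, e true]
        apply Relation.TransGen.single
        apply N.hD
        exact rect_row hrect true
    · rintro F G ⟨γ, hγ, hp⟩
      injection hp with hF hG2
      subst hF; subst hG2
      have htg := mem_dirClosure1_iff.1 hγ
      have hends := tg_ends N.qrefl htg
      constructor
      · apply facesRel_glue (C := face 1 false γ) (D := face 1 false γ)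
        apply mem_dirClosure1_iff.2
        rw [colOf_glue1, colOf_glue1]
        simp only [cond_false, cond_true, Bool.cond_self]
        rw [face1_pair]
        exact Relation.TransGen.single hends.1
      · apply facesRel_glue (C := face 1 true γ) (D := face 1 true γ)
        apply mem_dirClosure1_iff.2
        rw [colOf_glue1, colOf_glue1]
        simp only [cond_false, cond_true, Bool.cond_self]
        rw [face1_pair]
        exact Relation.TransGen.single hends.2
  · -- ssymm
    intro i
    rcases fin2_cases i with hi | hi <;> subst hi
    · rintro F G ⟨γ, hγ, hp⟩
      injection hp with hF hG2
      subst hF; subst hG2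
      have htg := mem_dirClosure1_iff.1 hγ
      apply facesRel_glue (C := face 0 true γ) (D := face 0 false γ)
      apply mem_dirClosure1_iff.2
      rw [colOf_glue0, colOf_glue0]
      have e : ∀ (b c : Bool), face (0 : Fin 2) b γ (fun _ => c) = γ (fBB b c) := by
        intro b c; rw [face0_eval]
      rw [e true false, e false false, e true true, e false true]
      have hlift := Relation.TransGen.lift (p := fun a b : A × A => (a, b) ∈ colP R)
        (f := Prod.swap) (fun a b hab => hG.col_swap hab) _ _ htg
      exact hlift
    · rintro F G ⟨γ, hγ, hp⟩
      injection hp with hF hG2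
      subst hF; subst hG2
      have htg := mem_dirClosure1_iff.1 hγ
      apply facesRel_glue (C := face 1 true γ) (D := face 1 false γ)
      apply mem_dirClosure1_iff.2
      rw [colOf_glue1, colOf_glue1]
      simp only [cond_false, cond_true]
      rw [face1_pair, face1_pair]
      exact tg_symm N.symm htg
  · -- gens
    exact Set.Subset.trans hG.hgens (sub_dirClosure 1 R)
  · -- rect
    exact closure1_rect hG hθe
  · -- cent
    intro γ h
    exact N.transGen_slim hTay hθe hδe _ _ (mem_dirClosure1_iff.1 h)

lemma Good.closure0 (hG : Good σ A θ δ R) (hθe : IsCongruence σ θ) :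
    Good σ A θ δ (dirClosure (0 : Fin 2) R) := by
  constructor
  · -- compat
    intro o γk hk
    have hk' := fun k => mem_dirClosure0_iff.1 (hk k)
    have := transGen_quad (fun o q hq => hG.row_compat o q hq)
      (fun X Y h => hG.row_qrefl h) o
      (fun k => rowOf false (γk k)) (fun k => rowOf true (γk k)) hk'
    exact mem_dirClosure0_iff.2 this
  · -- srefl
    intro i
    rcases fin2_cases i with hi | hi <;> subst hi
    · rintro F G ⟨γ, hγ, hp⟩
      injection hp with hF hG2
      subst hF; subst hG2
      have htg := mem_dirClosure0_iff.1 hγ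
      have hends := tg_ends (fun X Y h => hG.row_qrefl h) htg
      constructor
      · apply facesRel_glue (C := face 0 false γ) (D := face 0 false γ)
        apply mem_dirClosure0_iff.2
        rw [rowOf_glue0, rowOf_glue0]
        simp only [cond_false, cond_true, Bool.cond_self]
        rw [face0_pair]
        exact Relation.TransGen.single hends.1
      · apply facesRel_glue (C := face 0 true γ) (D := face 0 true γ)
        apply mem_dirClosure0_iff.2
        rw [rowOf_glue0, rowOf_glue0]
        simp only [cond_false, cond_true, Bool.cond_self]
        rw [face0_pair]
        exact Relation.TransGen.single hends.2
    · rintro F G ⟨γ, hγ, hp⟩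
      injection hp with hF hG2
      subst hF; subst hG2
      have hrect := closure0_rect hG hθe hγ
      constructor
      · apply facesRel_glue (C := face 1 false γ) (D := face 1 false γ)
        apply mem_dirClosure0_iff.2
        rw [rowOf_glue1, rowOf_glue1]
        have e : ∀ c : Bool, face (1 : Fin 2) false γ (fun _ => c) = γ (fBB c false) := by
          intro c; rw [face1_eval]
        rw [e false, e true]
        apply Relation.TransGen.single
        apply hG.row_hD
        exact rect_col hrect false
      · apply facesRel_glue (C := face 1 true γ) (D := face 1 true γ)
        apply mem_dirClosure0_iff.2
        rw [rowOf_glue1, rowOf_glue1]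
        have e : ∀ c : Bool, face (1 : Fin 2) true γ (fun _ => c) = γ (fBB c true) := by
          intro c; rw [face1_eval]
        rw [e false, e true]
        apply Relation.TransGen.single
        apply hG.row_hD
        exact rect_col hrect true
  · -- ssymm
    intro i
    rcases fin2_cases i with hi | hi <;> subst hi
    · rintro F G ⟨γ, hγ, hp⟩
      injection hp with hF hG2
      subst hF; subst hG2
      have htg := mem_dirClosure0_iff.1 hγ
      apply facesRel_glue (C := face 0 true γ) (D := face 0 false γ)
      apply mem_dirClosure0_iff.2
      rw [rowOf_glue0, rowOf_glue0]
      simp only [cond_false, cond_true]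
      rw [face0_pair, face0_pair]
      exact tg_symm (fun X Y h => hG.row_symm h) htg
    · rintro F G ⟨γ, hγ, hp⟩
      injection hp with hF hG2
      subst hF; subst hG2
      have htg := mem_dirClosure0_iff.1 hγ
      apply facesRel_glue (C := face 1 true γ) (D := face 1 false γ)
      apply mem_dirClosure0_iff.2
      rw [rowOf_glue1, rowOf_glue1]
      have e : ∀ (b c : Bool), face (1 : Fin 2) b γ (fun _ => c) = γ (fBB c b) := by
        intro b c; rw [face1_eval]
      rw [e true false, e false false, e true true, e false true]
      have hlift := Relation.TransGen.lift (p := fun a b : A × A => (a, b) ∈ rowP R)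
        (f := Prod.swap) (fun a b hab => hG.row_swap hab) _ _ htg
      exact hlift
  · -- gens
    exact Set.Subset.trans hG.hgens (sub_dirClosure 0 R)
  · -- rect
    exact closure0_rect hG hθe
  · -- cent
    intro γ h
    exact tg_iff (fun X Y hs => hG.row_cent hs) (mem_dirClosure0_iff.1 h)

end Stmt14Closure

section Stmt14MRel

variable {A : Type u} {σ : Signature} [Alg σ A] {θ δ : Set (A × A)}

lemma rect_compat (hθe : IsCongruence σ θ) :
    CompatCube σ (rectRel (fun _ : Fin 2 => θ) : Set (Cube (Fin 2) A)) := by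
  intro o γk h
  apply rect_of_corners
  · exact hθe.2.2.2 o _ _ fun k => rect_row (h k) false
  · exact hθe.2.2.2 o _ _ fun k => rect_row (h k) true
  · exact hθe.2.2.2 o _ _ fun k => rect_col (h k) false
  · exact hθe.2.2.2 o _ _ fun k => rect_col (h k) true

lemma rect_glue1 (hθe : IsCongruence σ θ) {γ : Cube (Fin 2) A}
    (h : γ ∈ rectRel (fun _ : Fin 2 => θ)) (b b' : Bool) :
    glue 1 (face 1 b γ) (face 1 b' γ) ∈ rectRel (fun _ : Fin 2 => θ) := by
  apply rect_of_corners
  · rw [rowOf_glue1]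
    have e : ∀ (c d : Bool), face (1 : Fin 2) c γ (fun _ => d) = γ (fBB d c) := by
      intro c d; rw [face1_eval]
    rw [e b false, e b' false]
    cases b <;> cases b'
    · exact hθe.1 _
    · exact rect_row h false
    · exact hθe.2.1 _ _ (rect_row h false)
    · exact hθe.1 _
  · rw [rowOf_glue1]
    have e : ∀ (c d : Bool), face (1 : Fin 2) c γ (fun _ => d) = γ (fBB d c) := by
      intro c d; rw [face1_eval]
    rw [e b true, e b' true]
    cases b <;> cases b'
    · exact hθe.1 _
    · exact rect_row h true
    · exact hθe.2.1 _ _ (rect_row h true)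
    · exact hθe.1 _
  · rw [colOf_glue1]
    simp only [cond_false]
    rw [face1_pair]
    exact rect_col h b
  · rw [colOf_glue1]
    simp only [cond_true]
    rw [face1_pair]
    exact rect_col h b'

lemma rect_glue0 (hθe : IsCongruence σ θ) {γ : Cube (Fin 2) A}
    (h : γ ∈ rectRel (fun _ : Fin 2 => θ)) (b b' : Bool) :
    glue 0 (face 0 b γ) (face 0 b' γ) ∈ rectRel (fun _ : Fin 2 => θ) := by
  apply rect_of_corners
  · rw [rowOf_glue0]
    simp only [cond_false]
    rw [face0_pair]
    exact rect_row h b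
  · rw [rowOf_glue0]
    simp only [cond_true]
    rw [face0_pair]
    exact rect_row h b'
  · rw [colOf_glue0]
    have e : ∀ (c d : Bool), face (0 : Fin 2) c γ (fun _ => d) = γ (fBB c d) := by
      intro c d; rw [face0_eval]
    rw [e b false, e b' false]
    cases b <;> cases b'
    · exact hθe.1 _
    · exact rect_col h false
    · exact hθe.2.1 _ _ (rect_col h false)
    · exact hθe.1 _
  · rw [colOf_glue0]
    have e : ∀ (c d : Bool), face (0 : Fin 2) c γ (fun _ => d) = γ (fBB c d) := by
      intro c d; rw [face0_eval]
    rw [e b true, e b' true]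
    cases b <;> cases b'
    · exact hθe.1 _
    · exact rect_col h true
    · exact hθe.2.1 _ _ (rect_col h true)
    · exact hθe.1 _

lemma rect_tol (hθe : IsCongruence σ θ) :
    IsTolerance σ (rectRel (fun _ : Fin 2 => θ) : Set (Cube (Fin 2) A)) := by
  refine ⟨rect_compat hθe, ?_, ?_⟩
  · intro i
    rintro F G ⟨γ, hγ, hp⟩
    injection hp with hF hG2
    subst hF; subst hG2
    rcases fin2_cases i with hi | hi <;> subst hi
    · exact ⟨facesRel_glue (rect_glue0 hθe hγ false false),
        facesRel_glue (rect_glue0 hθe hγ true true)⟩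
    · exact ⟨facesRel_glue (rect_glue1 hθe hγ false false),
        facesRel_glue (rect_glue1 hθe hγ true true)⟩
  · intro i
    rintro F G ⟨γ, hγ, hp⟩
    injection hp with hF hG2
    subst hF; subst hG2
    rcases fin2_cases i with hi | hi <;> subst hi
    · exact facesRel_glue (rect_glue0 hθe hγ true false)
    · exact facesRel_glue (rect_glue1 hθe hγ true false)

lemma gens_sub_rect (hθe : IsCongruence σ θ) :
    (⋃ i : Fin 2, cubeSet i θ) ⊆ (rectRel (fun _ : Fin 2 => θ) : Set (Cube (Fin 2) A)) := by
  intro γ hγ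
  obtain ⟨i, hi⟩ := Set.mem_iUnion.1 hγ
  obtain ⟨⟨x, y⟩, hxy, rfl⟩ := hi
  rcases fin2_cases i with hi | hi <;> subst hi
  · rw [cubeAt0_eq]
    apply rect_of_corners
    · rw [show rowOf false (sqCube x x y y) = (x, x) from by
        apply Prod.ext <;> simp [rowOf, sqCube_corner]]
      exact hθe.1 x
    · rw [show rowOf true (sqCube x x y y) = (y, y) from by
        apply Prod.ext <;> simp [rowOf, sqCube_corner]]
      exact hθe.1 y
    · rw [show colOf false (sqCube x x y y) = (x, y) from by
        apply Prod.ext <;> simp [colOf, sqCube_corner]]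
      exact hxy
    · rw [show colOf true (sqCube x x y y) = (x, y) from by
        apply Prod.ext <;> simp [colOf, sqCube_corner]]
      exact hxy
  · rw [cubeAt1_eq]
    apply rect_of_corners
    · rw [show rowOf false (sqCube x y x y) = (x, y) from by
        apply Prod.ext <;> simp [rowOf, sqCube_corner]]
      exact hxy
    · rw [show rowOf true (sqCube x y x y) = (x, y) from by
        apply Prod.ext <;> simp [rowOf, sqCube_corner]]
      exact hxy
    · rw [show colOf false (sqCube x y x y) = (x, x) from by
        apply Prod.ext <;> simp [colOf, sqCube_corner]]
      exact hθe.1 x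
    · rw [show colOf true (sqCube x y x y) = (y, y) from by
        apply Prod.ext <;> simp [colOf, sqCube_corner]]
      exact hθe.1 y

lemma good_MRel (hθe : IsCongruence σ θ)
    (hcent : ∀ γ ∈ MRel σ (fun _ : Fin 2 => θ),
      ((γ (fBB false false), γ (fBB false true)) ∈ δ ↔
        (γ (fBB true false), γ (fBB true true)) ∈ δ)) :
    Good σ A θ δ (MRel σ (fun _ : Fin 2 => θ)) := by
  constructor
  · intro o γk h
    intro R' hR'
    exact hR'.1.1 o γk fun k => h k R' hR'
  · intro i
    rintro F G ⟨γ, hγ, hp⟩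
    injection hp with hF hG2
    subst hF; subst hG2
    constructor
    · refine facesRel_glue (fun R' hR' => ?_)
      obtain ⟨hsq, hss⟩ := (hR'.1.2 : SRefl R' ∧ SSymm R')
      obtain ⟨ζ, hζ, hpp⟩ := (hsq i _ _ (facesRel_intro (hγ R' hR'))).1
      injection hpp with h1 h2
      nth_rewrite 2 [h2]
      rw [h1, glue_face_self]
      exact hζ
    · refine facesRel_glue (fun R' hR' => ?_)
      obtain ⟨hsq, hss⟩ := (hR'.1.2 : SRefl R' ∧ SSymm R')
      obtain ⟨ζ, hζ, hpp⟩ := (hsq i _ _ (facesRel_intro (hγ R' hR'))).2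
      injection hpp with h1 h2
      nth_rewrite 2 [h2]
      rw [h1, glue_face_self]
      exact hζ
  · intro i
    rintro F G ⟨γ, hγ, hp⟩
    injection hp with hF hG2
    subst hF; subst hG2
    refine facesRel_glue (fun R' hR' => ?_)
    obtain ⟨ζ, hζ, hpp⟩ := hR'.1.2.2 i _ _ (facesRel_intro (hγ R' hR'))
    injection hpp with h1 h2
    rw [h1, h2, glue_face_self]
    exact hζ
  · intro γ hγ R' hR'
    exact hR'.2 hγ
  · exact Set.sInter_subset_of_mem ⟨rect_tol hθe, gens_sub_rect hθe⟩
  · exact hcent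

end Stmt14MRel

section Stmt14Stages

variable {A : Type u} {σ : Signature} [Alg σ A] {θ δ : Set (A × A)}

def stageR (R0 : Set (Cube (Fin 2) A)) : ℕ → Set (Cube (Fin 2) A)
  | 0 => R0
  | m + 1 => dirClosure (if m % 2 = 0 then (0 : Fin 2) else 1) (stageR R0 m)

lemma good_stage {R0 : Set (Cube (Fin 2) A)} (hG0 : Good σ A θ δ R0)
    (hTay : IsTaylorAlg σ A) (hθe : IsCongruence σ θ) (hδe : IsCongruence σ δ) :
    ∀ m, Good σ A θ δ (stageR R0 m) := by
  intro m
  induction m with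
  | zero => exact hG0
  | succ m ih =>
      show Good σ A θ δ (dirClosure (if m % 2 = 0 then (0 : Fin 2) else 1) (stageR R0 m))
      by_cases hm : m % 2 = 0
      · rw [if_pos hm]
        exact ih.closure0 hθe
      · rw [if_neg hm]
        exact ih.closure1 hTay hθe hδe

lemma stage_mono {R0 : Set (Cube (Fin 2) A)} {m m' : ℕ} (h : m ≤ m') :
    stageR R0 m ⊆ stageR R0 m' := by
  induction m' with
  | zero =>
      have : m = 0 := by omega
      subst this; exact fun _ h => h
  | succ k ih =>
      rcases Nat.lt_or_ge m (k + 1) with hk | hk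
      · refine Set.Subset.trans (ih (by omega)) ?_
        show stageR R0 k ⊆ dirClosure _ (stageR R0 k)
        exact sub_dirClosure _ _
      · have : m = k + 1 := by omega
        subst this; exact fun _ h => h

lemma facesRel_mono {R S : Set (Cube (Fin 2) A)} (h : R ⊆ S) (i : Fin 2) :
    facesRel i R ⊆ facesRel i S := by
  rintro ⟨F, G⟩ ⟨γ, hγ, hp⟩
  exact ⟨γ, h hγ, hp⟩

/-- the union of the stages -/
def stageU (R0 : Set (Cube (Fin 2) A)) : Set (Cube (Fin 2) A) := ⋃ m, stageR R0 m

lemma stageU_hcong {R0 : Set (Cube (Fin 2) A)} (hG0 : Good σ A θ δ R0)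
    (hTay : IsTaylorAlg σ A) (hθe : IsCongruence σ θ) (hδe : IsCongruence σ δ) :
    IsHCongruence σ (stageU R0) := by
  have hGs := good_stage hG0 hTay hθe hδe
  refine ⟨⟨?_, ?_, ?_⟩, ?_⟩
  · -- compat
    intro o γk hk
    choose mk hmk using fun k => Set.mem_iUnion.1 (hk k)
    have hM : ∀ k, γk k ∈ stageR R0 (Finset.univ.sup mk) :=
      fun k => stage_mono (Finset.le_sup (Finset.mem_univ k)) (hmk k)
    exact Set.mem_iUnion.2 ⟨_, (hGs (Finset.univ.sup mk)).compat o γk hM⟩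
  · -- srefl
    intro i
    rintro F G ⟨γ, hγ, hp⟩
    obtain ⟨m, hm⟩ := Set.mem_iUnion.1 hγ
    have := (hGs m).srefl i _ _ ⟨γ, hm, hp⟩
    exact ⟨facesRel_mono (Set.subset_iUnion (stageR R0) m) i this.1,
           facesRel_mono (Set.subset_iUnion (stageR R0) m) i this.2⟩
  · -- ssymm
    intro i
    rintro F G ⟨γ, hγ, hp⟩
    obtain ⟨m, hm⟩ := Set.mem_iUnion.1 hγ
    exact facesRel_mono (Set.subset_iUnion (stageR R0) m) i ((hGs m).ssymm i _ _ ⟨γ, hm, hp⟩)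
  · -- strans
    intro i B C D hBC hCD
    obtain ⟨γ1, hγ1, hp1⟩ := hBC
    obtain ⟨γ2, hγ2, hp2⟩ := hCD
    obtain ⟨m1, hm1⟩ := Set.mem_iUnion.1 hγ1
    obtain ⟨m2, hm2⟩ := Set.mem_iUnion.1 hγ2
    set M0 := max m1 m2 with hM0
    -- pick a stage index N ≥ M0 with the right direction
    have key : ∀ N : ℕ, (if N % 2 = 0 then (0 : Fin 2) else 1) = i → M0 ≤ N →
        (B, D) ∈ facesRel i (stageU R0) := by
      intro N hdir hN
      have hBC' : (B, C) ∈ facesRel i (stageR R0 N) :=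
        ⟨γ1, stage_mono (le_trans (le_max_left _ _) hN) hm1, hp1⟩
      have hCD' : (C, D) ∈ facesRel i (stageR R0 N) :=
        ⟨γ2, stage_mono (le_trans (le_max_right _ _) hN) hm2, hp2⟩
      have hglue : glue i B D ∈ dirClosure i (stageR R0 N) := by
        show Relation.TransGen _ _ _
        rw [show face i false (glue i B D) = B from by rw [face_glue]; rfl,
            show face i true (glue i B D) = D from by rw [face_glue]; rfl]
        exact Relation.TransGen.tail (Relation.TransGen.single hBC') hCD'
      have hmem : glue i B D ∈ stageR R0 (N + 1) := by
        show glue i B D ∈ dirClosure (if N % 2 = 0 then (0 : Fin 2) else 1) (stageR R0 N)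
        rw [hdir]
        exact hglue
      exact facesRel_glue (Set.mem_iUnion.2 ⟨N + 1, hmem⟩)
    rcases fin2_cases i with hi | hi <;> subst hi
    · exact key (2 * M0) (by simp [Nat.mul_mod_right]) (by omega)
    · refine key (2 * M0 + 1) ?_ (by omega)
      have : (2 * M0 + 1) % 2 = 1 := by omega
      rw [this]
      simp

lemma stageU_cent {R0 : Set (Cube (Fin 2) A)} (hG0 : Good σ A θ δ R0)
    (hTay : IsTaylorAlg σ A) (hθe : IsCongruence σ θ) (hδe : IsCongruence σ δ) :
    ∀ γ ∈ stageU R0, ((γ (fBB false false), γ (fBB false true)) ∈ δ ↔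
      (γ (fBB true false), γ (fBB true true)) ∈ δ) := by
  intro γ hγ
  obtain ⟨m, hm⟩ := Set.mem_iUnion.1 hγ
  exact (good_stage hG0 hTay hθe hδe m).cent γ hm

/-- centrality transfers from MRel to DeltaRel in Taylor algebras -/
lemma central_transfer (hTay : IsTaylorAlg σ A) (hθe : IsCongruence σ θ)
    (hδe : IsCongruence σ δ)
    (hM : Centrality δ (lastIdx 2) (MRel σ (fun _ : Fin 2 => θ))) :
    Centrality δ (lastIdx 2) (DeltaRel σ (fun _ : Fin 2 => θ)) := by
  have hG0 : Good σ A θ δ (MRel σ (fun _ : Fin 2 => θ)) :=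
    good_MRel hθe ((centrality_iff δ _).1 hM)
  have hsub : DeltaRel σ (fun _ : Fin 2 => θ) ⊆ stageU (MRel σ (fun _ : Fin 2 => θ)) := by
    apply Set.sInter_subset_of_mem
    refine ⟨stageU_hcong hG0 hTay hθe hδe, ?_⟩
    refine Set.Subset.trans ?_ (Set.subset_iUnion (stageR _) 0)
    exact hG0.hgens
  rw [centrality_iff]
  intro γ hγ
  exact stageU_cent hG0 hTay hθe hδe γ (hsub hγ)

end Stmt14Stages

section Stmt14Final

variable {A : Type u}

lemma tcComm_cong (σ : Signature) [Alg σ A] (θ : Set (A × A)) :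
    IsCongruence σ (tcComm σ 2 (fun _ : Fin 2 => θ)) := by
  refine ⟨?_, ?_, ?_, ?_⟩
  · intro a δ' hδ'; exact hδ'.1.1 a
  · intro a b h δ' hδ'; exact hδ'.1.2.1 a b (h δ' hδ')
  · intro a b c h1 h2 δ' hδ'; exact hδ'.1.2.2.1 a b c (h1 δ' hδ') (h2 δ' hδ')
  · intro o x y h δ' hδ'; exact hδ'.1.2.2.2 o x y fun k => h k δ' hδ'

lemma theta_mem_tcSet {σ : Signature} [Alg σ A] {θ : Set (A × A)}
    (hθe : IsCongruence σ θ) :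
    Centrality θ (lastIdx 2) (MRel σ (fun _ : Fin 2 => θ)) := by
  rw [centrality_iff]
  intro γ hγ
  have hsub : MRel σ (fun _ : Fin 2 => θ) ⊆ rectRel (fun _ : Fin 2 => θ) :=
    Set.sInter_subset_of_mem ⟨rect_tol hθe, gens_sub_rect hθe⟩
  have hrect := hsub hγ
  constructor
  · intro _; exact rect_row hrect true
  · intro _; exact rect_row hrect false

lemma tcComm_Mcentral (σ : Signature) [Alg σ A] (θ : Set (A × A)) :
    Centrality (tcComm σ 2 (fun _ : Fin 2 => θ)) (lastIdx 2)
      (MRel σ (fun _ : Fin 2 => θ)) := by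
  rw [centrality_iff]
  intro γ hγ
  constructor
  · intro h δ' hδ'
    exact ((centrality_iff δ' _).1 hδ'.2 γ hγ).1 (h δ' hδ')
  · intro h δ' hδ'
    exact ((centrality_iff δ' _).1 hδ'.2 γ hγ).2 (h δ' hδ')

lemma centrality_anti {δ' : Set (A × A)}
    {R S : Set (Cube (Fin 2) A)} (h : R ⊆ S)
    (hc : Centrality δ' (lastIdx 2) S) : Centrality δ' (lastIdx 2) R := by
  intro hbad
  obtain ⟨γ, hγ, hcard⟩ := hbad
  exact hc ⟨γ, h hγ, hcard⟩

lemma MRel_sub_DeltaRel (σ : Signature) [Alg σ A] (θs : Fin 2 → Set (A × A)) :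
    MRel σ θs ⊆ DeltaRel σ θs := by
  apply Set.sInter_subset_sInter
  rintro R ⟨hH, hX⟩
  exact ⟨hH.1, hX⟩

end Stmt14Final

/-- for a Taylor algebra, the binary hypercommutator equals the binary
term condition commutator: `[θ,θ]_H = [θ,θ]_TC`. -/
theorem stmt14 {A : Type u} (σ : Signature) [Alg σ A] (hT : IsTaylorAlg σ A)
    (θ : Set (A × A)) (hθ : IsCongruence σ θ) :
    hComm σ 2 (fun _ : Fin 2 => θ) = tcComm σ 2 (fun _ : Fin 2 => θ) := by
  apply Set.Subset.antisymm
  · -- hComm ⊆ tcComm : tcComm is Δ-central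
    apply Set.sInter_subset_of_mem
    refine ⟨tcComm_cong σ θ, ?_⟩
    exact central_transfer hT hθ (tcComm_cong σ θ) (tcComm_Mcentral σ θ)
  · -- tcComm ⊆ hComm
    apply Set.sInter_subset_sInter
    rintro δ' ⟨hc, hcent⟩
    exact ⟨hc, centrality_anti (MRel_sub_DeltaRel σ _) hcent⟩
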